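/- Erdős–Ginzburg–Ziv theorem (abelian version): let G be an additive abelian group of order n and c_1,…,c_{2n−1} ∈ G. Then there exists a subset I ⊆ {1,…,2n−1} with |I| = n and ∑_{s∈I} c_s = 0. -/

import Mathlib

open Finset

private lemma egz_arith (p k j a b m : ℕ) (hk : 1 ≤ k) (hj : j + 1 ≤ 2 * p - 1)
    (hS : 2 * (p * k) - 1 ≤ a) (hB : b ≤ j * k) (hsd : a - b ≤ m) : 2 * k - 1 ≤ m := by
  have e1 : (j + 2) * k ≤ (2 * p) * k := Nat.mul_le_mul_right k (by omega)
  have e2 : (j + 2) * k = j * k + 2 * k := by ring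
  have e3 : 2 * (p * k) = (2 * p) * k := by ring
  omega

/-- General EGZ by strong induction on the order of the group. -/
lemma egz_aux : ∀ (n : ℕ), ∀ (G : Type*) [AddCommGroup G] [Fintype G],
    Fintype.card G = n → ∀ (ι : Type) (c : ι → G) (S : Finset ι),
    2 * n - 1 ≤ S.card → ∃ I ⊆ S, I.card = n ∧ ∑ s ∈ I, c s = 0 := by
  intro n
  induction n using Nat.strong_induction_on with
  | _ n ih =>
  intro G _ _ hcard ι c S hS
  classical
  by_cases hcyc : IsAddCyclic G
  · -- cyclic case: transfer from ZMod n via an isomorphism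
    have hn : Nat.card G = n := by rw [Nat.card_eq_fintype_card, hcard]
    let e : ZMod n ≃+ G := hn ▸ zmodAddCyclicAddEquiv hcyc
    obtain ⟨t, hts, htcard, htsum⟩ := ZMod.erdos_ginzburg_ziv (fun i => e.symm (c i)) hS
    refine ⟨t, hts, htcard, ?_⟩
    have := congrArg e htsum
    simpa [map_sum] using this
  · -- non-cyclic case: n is composite
    have hn1 : 1 ≤ n := hcard ▸ Fintype.card_pos
    have hnp : ¬ n.Prime := by
      intro hprime
      exact hcyc (isAddCyclic_of_prime_card (p := n) (hp := ⟨hprime⟩)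
        (by rw [Nat.card_eq_fintype_card, hcard]))
    have hn2 : 2 ≤ n := by
      by_contra h
      have hsub : Subsingleton G := Fintype.card_le_one_iff_subsingleton.mp (by omega)
      exact hcyc ⟨0, fun x => by
        simp only [Subsingleton.elim x 0] at *
        simpa using AddSubgroup.zero_mem (AddSubgroup.zmultiples (0 : G))⟩
    obtain ⟨p, hp, hpdvd⟩ := Nat.exists_prime_and_dvd (n := n) (by omega)
    obtain ⟨k, hnk⟩ := hpdvd
    have hpdvd' : p ∣ n := ⟨k, hnk⟩
    have hk2 : 2 ≤ k := by
      rcases (by omega : k = 0 ∨ k = 1 ∨ 2 ≤ k) with h0 | h1 | h2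
      · rw [h0, mul_zero] at hnk; omega
      · rw [h1, mul_one] at hnk; exact absurd (hnk ▸ hp) hnp
      · exact h2
    have hplt : p < n := by nlinarith [hp.two_le]
    have hklt : k < n := by nlinarith [hp.two_le]
    -- find a subgroup of order p
    haveI : Fact p.Prime := ⟨hp⟩
    obtain ⟨g, hg⟩ := exists_prime_addOrderOf_dvd_card p (by rw [hcard]; exact hpdvd')
    obtain ⟨H, hHdef⟩ : ∃ H : AddSubgroup G, H = AddSubgroup.zmultiples g := ⟨_, rfl⟩
    have hcardH : Nat.card H = p := by rw [hHdef, Nat.card_zmultiples, hg]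
    haveI : Fintype H := Fintype.ofFinite H
    have hcardH' : Fintype.card H = p := by rw [← Nat.card_eq_fintype_card, hcardH]
    haveI : Fintype (G ⧸ H) := Fintype.ofFinite _
    have hcardQ : Fintype.card (G ⧸ H) = k := by
      have := AddSubgroup.card_eq_card_quotient_mul_card_addSubgroup H
      rw [Nat.card_eq_fintype_card, hcard, hcardH, Nat.card_eq_fintype_card] at this
      nlinarith [hp.two_le]
    -- extract 2p-1 disjoint k-blocks with sum in H
    have key : ∀ j ≤ 2 * p - 1, ∃ 𝒜 : Finset (Finset ι), 𝒜.card = j ∧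
        (𝒜 : Set (Finset ι)).Pairwise Disjoint ∧
        ∀ ⦃t⦄, t ∈ 𝒜 → t ⊆ S ∧ t.card = k ∧ (∑ i ∈ t, c i) ∈ H := by
      intro j hj
      induction j with
      | zero => exact ⟨∅, by simp⟩
      | succ j ihj =>
        obtain ⟨𝒜, h𝒜card, h𝒜disj, h𝒜⟩ := ihj (by omega)
        have hBle : (𝒜.biUnion id).card ≤ j * k := by
          calc (𝒜.biUnion id).card ≤ ∑ t ∈ 𝒜, (id t).card := card_biUnion_le
            _ = j * k := by
                simp only [id_eq]
                rw [sum_const_nat fun t ht => (h𝒜 ht).2.1, h𝒜card]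
        have hrem : 2 * k - 1 ≤ (S \ 𝒜.biUnion id).card :=
          egz_arith p k j S.card (𝒜.biUnion id).card _ (by omega) hj
            (by rw [← hnk]; exact hS) hBle (le_card_sdiff _ _)
        obtain ⟨t₀, ht₀sub, ht₀card, ht₀sum⟩ :=
          ih k hklt (G ⧸ H) hcardQ ι (fun i => QuotientAddGroup.mk (c i))
            (S \ 𝒜.biUnion id) hrem
        have ht₀H : (∑ i ∈ t₀, c i) ∈ H := by
          rw [← QuotientAddGroup.eq_zero_iff, QuotientAddGroup.mk_sum]
          exact ht₀sum
        have ht₀new : t₀ ∉ 𝒜 := by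
          intro h
          have hsub' : t₀ ⊆ 𝒜.biUnion id := subset_biUnion_of_mem id h
          have ht₀empty : t₀ = ∅ := by
            have hd : Disjoint t₀ t₀ := sdiff_disjoint.mono ht₀sub hsub'
            simpa using hd.eq_bot_of_le le_rfl
          rw [ht₀empty] at ht₀card
          simp at ht₀card; omega
        refine ⟨𝒜.cons t₀ ht₀new, by rw [card_cons, h𝒜card], ?_, ?_⟩
        · simp only [cons_eq_insert, coe_insert,
            Set.pairwise_insert_of_symm, mem_coe, ne_eq]
          exact ⟨h𝒜disj, fun t ht _ =>
            sdiff_disjoint.mono ht₀sub (subset_biUnion_of_mem id ht)⟩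
        · simp only [cons_eq_insert, mem_insert, forall_eq_or_imp]
          exact ⟨⟨ht₀sub.trans sdiff_subset, ht₀card, ht₀H⟩, h𝒜⟩
    obtain ⟨𝒜, h𝒜card, h𝒜disj, h𝒜⟩ := key _ le_rfl
    -- apply the induction hypothesis to H with the block sums
    obtain ⟨d, hddef⟩ : ∃ d : Finset ι → H, d = fun t =>
        if h : (∑ i ∈ t, c i) ∈ H then (⟨∑ i ∈ t, c i, h⟩ : H) else 0 := ⟨_, rfl⟩
    obtain ⟨ℬ, hℬ𝒜, hℬcard, hℬsum⟩ :=
      ih p hplt H hcardH' (Finset ι) d 𝒜 (by rw [h𝒜card])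
    refine ⟨ℬ.biUnion (fun t => t), ?_, ?_, ?_⟩
    · exact biUnion_subset.2 fun t ht => (h𝒜 (hℬ𝒜 ht)).1
    · rw [card_biUnion (fun t ht u hu htu => h𝒜disj (hℬ𝒜 ht) (hℬ𝒜 hu) htu)]
      rw [sum_const_nat fun t ht => (h𝒜 (hℬ𝒜 ht)).2.1, hℬcard, ← hnk]
    · rw [sum_biUnion (fun t ht u hu htu => h𝒜disj (hℬ𝒜 ht) (hℬ𝒜 hu) htu)]
      have hcoe : ((∑ t ∈ ℬ, d t : H) : G) = 0 := by rw [hℬsum]; rfl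
      rw [AddSubmonoidClass.coe_finset_sum] at hcoe
      rw [← hcoe]
      refine Finset.sum_congr rfl fun t ht => ?_
      rw [hddef]
      simp only [id_eq, dif_pos ((h𝒜 (hℬ𝒜 ht)).2.2)]

theorem stmt_14 (G : Type*) [AddCommGroup G] [Fintype G] (n : ℕ)
    (hcard : Fintype.card G = n) (c : Fin (2 * n - 1) → G) :
    ∃ I : Finset (Fin (2 * n - 1)), I.card = n ∧ ∑ s ∈ I, c s = 0 := by
  obtain ⟨I, -, hI⟩ := egz_aux n G hcard (Fin (2 * n - 1)) c Finset.univ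
    (by simp)
  exact ⟨I, hI⟩
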